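/- Let N ≥ 1, let G be a closed subgroup of U_N with Haar probability measure μ, let I ⊆ {1,…,N} be nonempty, let k ≥ 1, and let e = (e_1,…,e_k) be a word with letters in {∘,•}. Let (ξ_π)_{π∈D} be a finite basis of Fix_e(G) = {ξ : {1,…,N}^k → ℂ : g^{⊗e} ξ = ξ for all g ∈ G}, let G_{kN}(π,σ) = Σ_{j∈{1,…,N}^k} conj(ξ_π(j)) ξ_σ(j) be the Gram matrix and W_{kN} = G_{kN}^{-1}, and for σ ∈ D set K_I(σ) = |I|^{-k/2} Σ_{b∈I^k} conj(ξ_σ(b)). Then for every multi-index i ∈ {1,…,N}^k one has ∫_G ∏_{a=1}^k ((g ξ_I)_{i_a})^{e_a} dμ(g) = Σ_{π,σ∈D} ξ_π(i) K_I(σ) W_{kN}(π,σ), where for a scalar x, x^∘ = x and x^• = conj(x). -/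

import Mathlib

open Matrix MeasureTheory

/-- `x^∘ = x` and `x^• = conj x`, for a scalar `x` (here `true` encodes `•`). -/
noncomputable def dec (b : Bool) (z : ℂ) : ℂ := if b then (starRingEnd ℂ) z else z

/-- The decorated tensor power `g^{⊗e}` of a matrix `g ∈ M_N(ℂ)`, for a word `e` with letters
in `{∘,•}` (here `true` encodes `•`): the matrix with entries `∏_a g_{i_a j_a}^{e_a}`. -/
noncomputable def decPow {N k : ℕ} (e : Fin k → Bool) (g : Matrix (Fin N) (Fin N) ℂ) :
    Matrix (Fin k → Fin N) (Fin k → Fin N) ℂ :=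
  Matrix.of fun i j => ∏ a, dec (e a) (g (i a) (j a))

/-- The space `Fix_e(G)` of vectors `ξ : {1,…,N}^k → ℂ` with `g^{⊗e} ξ = ξ` for all `g ∈ G`. -/
noncomputable def FixE {N k : ℕ} (G : Subgroup (Matrix.unitaryGroup (Fin N) ℂ))
    (e : Fin k → Bool) : Submodule ℂ ((Fin k → Fin N) → ℂ) where
  carrier := {ξ | ∀ g ∈ G, decPow e (g : Matrix (Fin N) (Fin N) ℂ) *ᵥ ξ = ξ}
  add_mem' := by
    intro a b ha hb g hg
    rw [Matrix.mulVec_add, ha g hg, hb g hg]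
  zero_mem' := by
    intro g hg
    rw [Matrix.mulVec_zero]
  smul_mem' := by
    intro c a ha g hg
    rw [Matrix.mulVec_smul, ha g hg]

/-- The unit vector `ξ_I ∈ ℂ^N`, with coordinates `1/√|I|` on `I` and `0` elsewhere. -/
noncomputable def xiI (N : ℕ) (I : Finset (Fin N)) : Fin N → ℂ :=
  fun i => if i ∈ I then ((1 / Real.sqrt I.card : ℝ) : ℂ) else 0

/-- We equip a closed subgroup `G ⊆ U_N` with its Borel σ-algebra. -/
noncomputable instance instMeasSubgroupUG {N : ℕ} (G : Subgroup (Matrix.unitaryGroup (Fin N) ℂ)) :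
    MeasurableSpace G := borel G

instance instBorelSubgroupUG {N : ℕ} (G : Subgroup (Matrix.unitaryGroup (Fin N) ℂ)) :
    BorelSpace G := ⟨rfl⟩

section WeingartenAux

open scoped ComplexOrder

lemma dec_mul (b : Bool) (x y : ℂ) : dec b (x * y) = dec b x * dec b y := by
  cases b <;> simp [dec]

lemma dec_sum {α : Type*} (s : Finset α) (b : Bool) (f : α → ℂ) :
    dec b (∑ x ∈ s, f x) = ∑ x ∈ s, dec b (f x) := by
  cases b <;> simp [dec]

lemma conj_dec (b : Bool) (z : ℂ) :
    (starRingEnd ℂ) (dec b z) = dec b ((starRingEnd ℂ) z) := by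
  cases b <;> simp [dec]

lemma norm_dec (b : Bool) (z : ℂ) : ‖dec b z‖ = ‖z‖ := by
  cases b <;> simp [dec]

lemma continuous_dec (b : Bool) : Continuous (dec b) := by
  cases b
  · exact continuous_id
  · exact continuous_star

lemma decPow_mul {N k : ℕ} (e : Fin k → Bool) (A B : Matrix (Fin N) (Fin N) ℂ) :
    decPow e (A * B) = decPow e A * decPow e B := by
  ext i j
  simp only [decPow, Matrix.mul_apply, Matrix.of_apply]
  calc ∏ a, dec (e a) (∑ m, A (i a) m * B m (j a))
      = ∏ a, ∑ m, dec (e a) (A (i a) m) * dec (e a) (B m (j a)) := by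
        refine Finset.prod_congr rfl fun a _ => ?_
        rw [dec_sum]
        exact Finset.sum_congr rfl fun m _ => dec_mul _ _ _
    _ = ∑ x : Fin k → Fin N, ∏ a, dec (e a) (A (i a) (x a)) * dec (e a) (B (x a) (j a)) :=
        Fintype.prod_sum _
    _ = ∑ x : Fin k → Fin N,
          (∏ a, dec (e a) (A (i a) (x a))) * ∏ a, dec (e a) (B (x a) (j a)) := by
        refine Finset.sum_congr rfl fun x _ => ?_
        rw [Finset.prod_mul_distrib]

lemma conj_decPow {N k : ℕ} (e : Fin k → Bool) (A : Matrix (Fin N) (Fin N) ℂ)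
    (i j : Fin k → Fin N) :
    (starRingEnd ℂ) (decPow e A i j) = decPow e (star A) j i := by
  simp only [decPow, Matrix.of_apply, map_prod, Matrix.star_apply, Matrix.conjTranspose_apply]
  exact Finset.prod_congr rfl fun a _ => conj_dec _ _

lemma unitary_entry_norm_le {N : ℕ} (u : Matrix.unitaryGroup (Fin N) ℂ) (p q : Fin N) :
    ‖(u : Matrix (Fin N) (Fin N) ℂ) p q‖ ≤ 1 := by
  have h : ((star (u : Matrix (Fin N) (Fin N) ℂ)) * (u : Matrix (Fin N) (Fin N) ℂ)) q q
      = (1 : Matrix (Fin N) (Fin N) ℂ) q q := by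
    rw [Unitary.star_mul_self_of_mem u.prop]
  have h2 : ∑ p', (Complex.normSq ((u : Matrix (Fin N) (Fin N) ℂ) p' q) : ℂ) = 1 := by
    rw [Matrix.mul_apply] at h
    simp only [Matrix.one_apply_eq] at h
    rw [← h]
    refine Finset.sum_congr rfl fun p' _ => ?_
    simp [Matrix.star_apply, Matrix.conjTranspose_apply, Complex.normSq_eq_conj_mul_self]
  have h3 : ∑ p', Complex.normSq ((u : Matrix (Fin N) (Fin N) ℂ) p' q) = 1 := by
    have := congrArg Complex.re h2
    simpa using this
  have h4 : Complex.normSq ((u : Matrix (Fin N) (Fin N) ℂ) p q) ≤ 1 := by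
    rw [← h3]
    exact Finset.single_le_sum (f := fun p' => Complex.normSq ((u : Matrix (Fin N) (Fin N) ℂ) p' q))
      (fun p' _ => Complex.normSq_nonneg _) (Finset.mem_univ p)
  have h5 : ‖(u : Matrix (Fin N) (Fin N) ℂ) p q‖ = Real.sqrt
      (Complex.normSq ((u : Matrix (Fin N) (Fin N) ℂ) p q)) := by
    rw [Complex.norm_def]
  rw [h5]
  calc Real.sqrt (Complex.normSq ((u : Matrix (Fin N) (Fin N) ℂ) p q))
      ≤ Real.sqrt 1 := Real.sqrt_le_sqrt h4
    _ = 1 := Real.sqrt_one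

noncomputable instance secondCountableMatrix (N : ℕ) :
    SecondCountableTopology (Matrix (Fin N) (Fin N) ℂ) :=
  inferInstanceAs (SecondCountableTopology (Fin N → Fin N → ℂ))

noncomputable instance secondCountableUG (N : ℕ) :
    SecondCountableTopology (Matrix.unitaryGroup (Fin N) ℂ) :=
  TopologicalSpace.secondCountableTopology_induced _ _
    (Subtype.val : Matrix.unitaryGroup (Fin N) ℂ → Matrix (Fin N) (Fin N) ℂ)

noncomputable instance topGroupUG (N : ℕ) :
    IsTopologicalGroup (Matrix.unitaryGroup (Fin N) ℂ) where
  continuous_inv := by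
    have : Continuous fun u : Matrix.unitaryGroup (Fin N) ℂ =>
        (star u : Matrix.unitaryGroup (Fin N) ℂ) := by
      apply Continuous.subtype_mk
      exact continuous_star.comp continuous_subtype_val
    exact this

noncomputable instance secondCountableSubgroupUG (N : ℕ)
    (G : Subgroup (Matrix.unitaryGroup (Fin N) ℂ)) : SecondCountableTopology G :=
  TopologicalSpace.secondCountableTopology_induced _ _
    (Subtype.val : G → Matrix.unitaryGroup (Fin N) ℂ)

lemma gram_det_isUnit {n m : Type*} [Fintype n] [DecidableEq n] [Fintype m]
    (ξ : n → m → ℂ) (hind : LinearIndependent ℂ ξ) (Gm : Matrix n n ℂ)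
    (hGm : ∀ π σ, Gm π σ = ∑ j, (starRingEnd ℂ) (ξ π j) * ξ σ j) : IsUnit Gm.det := by
  classical
  set B : Matrix m n ℂ := Matrix.of fun j π => ξ π j with hB
  have hGB : Gm = Bᴴ * B := by
    ext π σ
    rw [hGm π σ, Matrix.mul_apply]
    exact Finset.sum_congr rfl fun j _ => by simp [hB, Matrix.conjTranspose_apply]
  have hpd : Gm.PosDef := by
    rw [Matrix.posDef_iff_dotProduct_mulVec]
    constructor
    · rw [hGB]
      exact Matrix.isHermitian_conjTranspose_mul_self B
    · intro x hx
      rw [hGB, ← Matrix.mulVec_mulVec, Matrix.dotProduct_mulVec,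
        Matrix.vecMul_conjTranspose, star_star]
      refine Matrix.dotProduct_star_self_pos_iff.mpr ?_
      intro h0
      apply hx
      have h1 : ∀ j, ∑ π, ξ π j * x π = 0 := by
        intro j
        have := congrFun h0 j
        simpa [hB, Matrix.mulVec, dotProduct] using this
      funext π
      refine Fintype.linearIndependent_iff.mp hind x ?_ π
      funext j
      rw [Finset.sum_apply]
      simp only [Pi.smul_apply, smul_eq_mul, Pi.zero_apply]
      rw [← h1 j]
      exact Finset.sum_congr rfl fun π' _ => mul_comm _ _
  exact hpd.det_pos.ne'.isUnit

end WeingartenAux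

/-- The Weingarten formula for the affine homogeneous space `X_{G,I}` in the classical case:
`∫_G ∏_a ((g ξ_I)_{i_a})^{e_a} dμ(g) = Σ_{π,σ ∈ D} ξ_π(i) K_I(σ) W_{kN}(π,σ)`, where
`K_I(σ) = |I|^{-k/2} Σ_{b ∈ I^k} conj(ξ_σ(b))` and `W_{kN}` is the inverse Gram matrix of a
basis `(ξ_π)_{π ∈ D}` of `Fix_e(G)`. -/
theorem stmt5 (N : ℕ) (hN : 1 ≤ N) (G : Subgroup (Matrix.unitaryGroup (Fin N) ℂ))
    (hG : IsClosed (G : Set (Matrix.unitaryGroup (Fin N) ℂ)))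
    (μ : Measure G) [IsProbabilityMeasure μ]
    [μ.IsMulLeftInvariant] [μ.IsMulRightInvariant]
    (I : Finset (Fin N)) (hI : I.Nonempty)
    (k : ℕ) (hk : 1 ≤ k) (e : Fin k → Bool)
    (D : Type*) [Fintype D] [DecidableEq D]
    (ξ : D → ((Fin k → Fin N) → ℂ))
    (hmem : ∀ π, ξ π ∈ FixE G e)
    (hind : LinearIndependent ℂ ξ)
    (hspan : Submodule.span ℂ (Set.range ξ) = FixE G e)
    (Gm : Matrix D D ℂ)
    (hGm : ∀ π σ, Gm π σ = ∑ j : Fin k → Fin N, (starRingEnd ℂ) (ξ π j) * ξ σ j)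
    (K : D → ℂ)
    (hK : ∀ σ, K σ = ((1 / Real.sqrt ((I.card : ℝ) ^ k) : ℝ) : ℂ) *
      ∑ b : Fin k → {x // x ∈ I}, (starRingEnd ℂ) (ξ σ (fun a => (b a : Fin N)))) :
    ∀ i : Fin k → Fin N,
      (∫ g : G, ∏ a, dec (e a)
          ((((g : Matrix.unitaryGroup (Fin N) ℂ) : Matrix (Fin N) (Fin N) ℂ) *ᵥ xiI N I)
            (i a)) ∂μ) =
        ∑ π : D, ∑ σ : D, ξ π i * K σ * Gm⁻¹ π σ := by
  classical
  intro i
  -- notation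
  set M : G → Matrix (Fin N) (Fin N) ℂ :=
    fun g => ((g : Matrix.unitaryGroup (Fin N) ℂ) : Matrix (Fin N) (Fin N) ℂ) with hMdef
  set η : (Fin k → Fin N) → ℂ := fun j => ∏ a, xiI N I (j a) with hηdef
  set F : (Fin k → Fin N) → G → ℂ := fun j g => (decPow e (M g) *ᵥ η) j with hFdef
  set v : (Fin k → Fin N) → ℂ := fun j => ∫ g, F j g ∂μ with hvdef
  have hMmul : ∀ (u : Matrix.unitaryGroup (Fin N) ℂ) (hu : u ∈ G) (g : G),
      M ((⟨u, hu⟩ : G) * g) = (u : Matrix (Fin N) (Fin N) ℂ) * M g := fun _ _ _ => rfl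
  have hMinv : ∀ g : G, M g⁻¹ = star (M g) := fun _ => rfl
  have hentry : ∀ (g : G) (p q : Fin N), ‖M g p q‖ ≤ 1 :=
    fun g => unitary_entry_norm_le (g : Matrix.unitaryGroup (Fin N) ℂ)
  have hcardI : (0 : ℝ) < I.card := by exact_mod_cast hI.card_pos
  have hsqrt1 : (1 : ℝ) ≤ Real.sqrt I.card := by
    rw [show (1 : ℝ) = Real.sqrt 1 by rw [Real.sqrt_one]]
    exact Real.sqrt_le_sqrt (by exact_mod_cast hI.card_pos)
  have hxiI : ∀ m, ‖xiI N I m‖ ≤ 1 := by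
    intro m
    unfold xiI
    split
    · rw [Complex.norm_real, Real.norm_eq_abs, abs_of_nonneg (by positivity),
        div_le_one (by linarith)]
      linarith
    · simp
  have hη_norm : ∀ j, ‖η j‖ ≤ 1 := by
    intro j
    rw [hηdef]
    calc ‖∏ a, xiI N I (j a)‖ = ∏ a, ‖xiI N I (j a)‖ := norm_prod _ _
      _ ≤ 1 := Finset.prod_le_one (fun a _ => norm_nonneg _) (fun a _ => hxiI _)
  have hdec_xi : ∀ (b : Bool) (m : Fin N), dec b (xiI N I m) = xiI N I m := by
    intro b m
    unfold xiI
    split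
    · cases b <;> simp [dec]
    · cases b <;> simp [dec]
  -- pointwise identity between the integrand and `F i`
  have hpt : ∀ g : G, (∏ a, dec (e a) ((M g *ᵥ xiI N I) (i a))) = F i g := by
    intro g
    calc ∏ a, dec (e a) ((M g *ᵥ xiI N I) (i a))
        = ∏ a, ∑ m, dec (e a) (M g (i a) m) * xiI N I m := by
          refine Finset.prod_congr rfl fun a _ => ?_
          rw [show (M g *ᵥ xiI N I) (i a) = ∑ m, M g (i a) m * xiI N I m from rfl, dec_sum]
          exact Finset.sum_congr rfl fun m _ => by rw [dec_mul, hdec_xi]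
      _ = ∑ j : Fin k → Fin N, ∏ a, dec (e a) (M g (i a) (j a)) * xiI N I (j a) :=
          Fintype.prod_sum _
      _ = ∑ j : Fin k → Fin N, decPow e (M g) i j * η j := by
          refine Finset.sum_congr rfl fun j _ => ?_
          rw [Finset.prod_mul_distrib]
          rfl
      _ = F i g := rfl
  -- continuity and integrability
  have hcont : ∀ j, Continuous (F j) := by
    intro j
    rw [show F j = fun g => ∑ m, decPow e (M g) j m * η m from rfl]
    refine continuous_finset_sum _ fun m _ => ?_
    refine Continuous.mul ?_ continuous_const
    rw [show (fun g : G => decPow e (M g) j m)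
        = fun g : G => ∏ a, dec (e a) (M g (j a) (m a)) from rfl]
    refine continuous_finset_prod _ fun a _ => ?_
    have h1 : Continuous fun g : G => (g : Matrix.unitaryGroup (Fin N) ℂ) :=
      continuous_subtype_val
    have h2 : Continuous fun g : G => M g := continuous_subtype_val.comp h1
    have h3 : Continuous fun g : G => M g (j a) := (continuous_apply (j a)).comp h2
    have h4 : Continuous fun g : G => M g (j a) (m a) := (continuous_apply (m a)).comp h3
    exact (continuous_dec _).comp h4
  have hFbound : ∀ j (g : G), ‖F j g‖ ≤ (Fintype.card (Fin k → Fin N) : ℝ) := by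
    intro j g
    have h1 : ∀ m : Fin k → Fin N, ‖decPow e (M g) j m * η m‖ ≤ 1 := by
      intro m
      rw [norm_mul]
      have h2 : ‖decPow e (M g) j m‖ ≤ 1 := by
        have h2' : ‖decPow e (M g) j m‖ = ∏ a, ‖M g (j a) (m a)‖ := by
          simp only [decPow, Matrix.of_apply]
          rw [norm_prod]
          exact Finset.prod_congr rfl fun a _ => norm_dec _ _
        rw [h2']
        exact Finset.prod_le_one (fun a _ => norm_nonneg _) (fun a _ => hentry g _ _)
      have h3 : ‖η m‖ ≤ 1 := hη_norm m
      nlinarith [norm_nonneg (η m), norm_nonneg (decPow e (M g) j m)]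
    calc ‖F j g‖ = ‖∑ m, decPow e (M g) j m * η m‖ := rfl
      _ ≤ ∑ m : Fin k → Fin N, ‖decPow e (M g) j m * η m‖ := norm_sum_le _ _
      _ ≤ ∑ _m : Fin k → Fin N, (1 : ℝ) := Finset.sum_le_sum fun m _ => h1 m
      _ = (Fintype.card (Fin k → Fin N) : ℝ) := by simp [Finset.card_univ]
  have hint : ∀ j, Integrable (F j) μ := fun j =>
    ⟨(hcont j).aestronglyMeasurable,
      HasFiniteIntegral.of_bounded (ae_of_all μ (hFbound j))⟩
  -- the integral vector `v` is `G`-fixed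
  have hvfix : ∀ u ∈ G, decPow e (u : Matrix (Fin N) (Fin N) ℂ) *ᵥ v = v := by
    intro u hu
    funext j
    have step1 : ∀ g : G,
        (∑ m, decPow e (u : Matrix (Fin N) (Fin N) ℂ) j m * F m g)
          = F j ((⟨u, hu⟩ : G) * g) := by
      intro g
      have h2 : F j ((⟨u, hu⟩ : G) * g)
          = (decPow e ((u : Matrix (Fin N) (Fin N) ℂ) * M g) *ᵥ η) j := by
        rw [hFdef]
        simp only
        rw [hMmul u hu g]
      rw [h2, decPow_mul, ← Matrix.mulVec_mulVec]
      rfl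
    calc (decPow e (u : Matrix (Fin N) (Fin N) ℂ) *ᵥ v) j
        = ∑ m, decPow e (u : Matrix (Fin N) (Fin N) ℂ) j m * ∫ g, F m g ∂μ := rfl
      _ = ∑ m, ∫ g, decPow e (u : Matrix (Fin N) (Fin N) ℂ) j m * F m g ∂μ :=
          Finset.sum_congr rfl fun m _ => (integral_const_mul _ _).symm
      _ = ∫ g, ∑ m, decPow e (u : Matrix (Fin N) (Fin N) ℂ) j m * F m g ∂μ :=
          (integral_finset_sum _ fun m _ => (hint m).const_mul _).symm
      _ = ∫ g, F j ((⟨u, hu⟩ : G) * g) ∂μ :=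
          integral_congr_ae (ae_of_all μ fun g => step1 g)
      _ = ∫ g, F j g ∂μ := integral_mul_left_eq_self (F j) _
      _ = v j := rfl
  have hvmem : v ∈ Submodule.span ℂ (Set.range ξ) := by
    rw [hspan]; exact hvfix
  obtain ⟨c, hc⟩ := (Submodule.mem_span_range_iff_exists_fun ℂ).mp hvmem
  -- conjugate fixed-vector relation
  have hstarfix : ∀ (g : G) (σ : D) (j : Fin k → Fin N),
      ∑ m, (starRingEnd ℂ) (ξ σ m) * decPow e (M g) m j = (starRingEnd ℂ) (ξ σ j) := by
    intro g σ j
    have h1 := hmem σ ((g⁻¹ : G) : Matrix.unitaryGroup (Fin N) ℂ) (g⁻¹ : G).2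
    have h2 : ∀ j', ∑ m, decPow e (star (M g)) j' m * ξ σ m = ξ σ j' := by
      intro j'
      have h3 := congrFun h1 j'
      rw [show ((((g⁻¹ : G) : Matrix.unitaryGroup (Fin N) ℂ)) : Matrix (Fin N) (Fin N) ℂ)
        = star (M g) from hMinv g] at h3
      exact h3
    calc ∑ m, (starRingEnd ℂ) (ξ σ m) * decPow e (M g) m j
        = ∑ m, (starRingEnd ℂ) (decPow e (star (M g)) j m * ξ σ m) := by
          refine Finset.sum_congr rfl fun m _ => ?_
          rw [_root_.map_mul, conj_decPow, star_star, mul_comm]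
      _ = (starRingEnd ℂ) (∑ m, decPow e (star (M g)) j m * ξ σ m) := (map_sum _ _ _).symm
      _ = (starRingEnd ℂ) (ξ σ j) := by rw [h2 j]
  -- `⟨ξ σ, v⟩ = K σ`
  have hKv : ∀ σ, (∑ j, (starRingEnd ℂ) (ξ σ j) * v j) = K σ := by
    intro σ
    have hconst : ∀ g : G, (∑ j, (starRingEnd ℂ) (ξ σ j) * F j g)
        = ∑ j, (starRingEnd ℂ) (ξ σ j) * η j := by
      intro g
      calc ∑ j, (starRingEnd ℂ) (ξ σ j) * F j g
          = ∑ j, ∑ m, (starRingEnd ℂ) (ξ σ j) * (decPow e (M g) j m * η m) := by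
            refine Finset.sum_congr rfl fun j _ => ?_
            rw [show F j g = ∑ m, decPow e (M g) j m * η m from rfl, Finset.mul_sum]
        _ = ∑ m, (∑ j, (starRingEnd ℂ) (ξ σ j) * decPow e (M g) j m) * η m := by
            rw [Finset.sum_comm]
            refine Finset.sum_congr rfl fun m _ => ?_
            rw [Finset.sum_mul]
            exact Finset.sum_congr rfl fun j _ => by ring
        _ = ∑ m, (starRingEnd ℂ) (ξ σ m) * η m := by
            refine Finset.sum_congr rfl fun m _ => ?_
            rw [hstarfix g σ m]
    have hintconst : (∑ j, (starRingEnd ℂ) (ξ σ j) * v j)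
        = ∑ j, (starRingEnd ℂ) (ξ σ j) * η j := by
      calc ∑ j, (starRingEnd ℂ) (ξ σ j) * v j
          = ∑ j, ∫ g, (starRingEnd ℂ) (ξ σ j) * F j g ∂μ :=
            Finset.sum_congr rfl fun j _ => (integral_const_mul _ _).symm
        _ = ∫ g, ∑ j, (starRingEnd ℂ) (ξ σ j) * F j g ∂μ :=
            (integral_finset_sum _ fun j _ => (hint j).const_mul _).symm
        _ = ∫ _g, (∑ j, (starRingEnd ℂ) (ξ σ j) * η j) ∂μ :=
            integral_congr_ae (ae_of_all μ fun g => hconst g)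
        _ = ∑ j, (starRingEnd ℂ) (ξ σ j) * η j := by
            rw [integral_const]
            simp
    rw [hintconst]
    -- evaluate the constant
    set cI : ℝ := 1 / Real.sqrt I.card with hcIdef
    have hηval : ∀ j : Fin k → Fin N,
        η j = if (∀ a, j a ∈ I) then ((cI ^ k : ℝ) : ℂ) else 0 := by
      intro j
      by_cases h : ∀ a, j a ∈ I
      · rw [if_pos h, hηdef]
        calc (∏ a, xiI N I (j a)) = ∏ _a : Fin k, ((cI : ℝ) : ℂ) := by
              refine Finset.prod_congr rfl fun a _ => ?_
              unfold xiI
              rw [if_pos (h a)]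
            _ = ((cI ^ k : ℝ) : ℂ) := by
              rw [Finset.prod_const]
              push_cast
              simp [Finset.card_univ]
      · rw [if_neg h]
        push_neg at h
        obtain ⟨a, ha⟩ := h
        exact Finset.prod_eq_zero (Finset.mem_univ a) (by simp [xiI, ha])
    have himg : (Finset.univ.filter fun j : Fin k → Fin N => ∀ a, j a ∈ I)
        = Finset.univ.image (fun b : Fin k → {x // x ∈ I} => fun a => (b a : Fin N)) := by
      ext j
      simp only [Finset.mem_filter, Finset.mem_univ, true_and, Finset.mem_image]
      constructor
      · intro h
        exact ⟨fun a => ⟨j a, h a⟩, rfl⟩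
      · rintro ⟨b, rfl⟩
        exact fun a => (b a).2
    have hsqrtpow : Real.sqrt ((I.card : ℝ) ^ k) = Real.sqrt I.card ^ k := by
      have h0 : ((Real.sqrt I.card) ^ k) ^ 2 = (I.card : ℝ) ^ k := by
        rw [← pow_mul, mul_comm, pow_mul, Real.sq_sqrt hcardI.le]
      rw [← h0, Real.sqrt_sq (pow_nonneg (Real.sqrt_nonneg _) _)]
    calc ∑ j, (starRingEnd ℂ) (ξ σ j) * η j
        = ∑ j : Fin k → Fin N,
            (if (∀ a, j a ∈ I) then (starRingEnd ℂ) (ξ σ j) * ((cI ^ k : ℝ) : ℂ) else 0) := by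
          refine Finset.sum_congr rfl fun j _ => ?_
          rw [hηval j]
          split <;> simp
      _ = ∑ j ∈ Finset.univ.filter (fun j : Fin k → Fin N => ∀ a, j a ∈ I),
            (starRingEnd ℂ) (ξ σ j) * ((cI ^ k : ℝ) : ℂ) :=
          (Finset.sum_filter _ _).symm
      _ = ∑ b : Fin k → {x // x ∈ I},
            (starRingEnd ℂ) (ξ σ (fun a => (b a : Fin N))) * ((cI ^ k : ℝ) : ℂ) := by
          rw [himg, Finset.sum_image]
          intro b1 _ b2 _ h
          funext a
          exact Subtype.ext (congrFun h a)
      _ = ((cI ^ k : ℝ) : ℂ) *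
            ∑ b : Fin k → {x // x ∈ I}, (starRingEnd ℂ) (ξ σ (fun a => (b a : Fin N))) := by
          rw [← Finset.sum_mul, mul_comm]
      _ = K σ := by
          rw [hK σ]
          congr 2
          rw [hcIdef, div_pow, one_pow, hsqrtpow]
  -- Gram relation `K = Gm *ᵥ c`
  have hGmc : ∀ σ, K σ = ∑ π, Gm σ π * c π := by
    intro σ
    rw [← hKv σ]
    calc ∑ j, (starRingEnd ℂ) (ξ σ j) * v j
        = ∑ j, ∑ π, (starRingEnd ℂ) (ξ σ j) * (c π * ξ π j) := by
          refine Finset.sum_congr rfl fun j _ => ?_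
          have hvj : v j = ∑ π, c π * ξ π j := by
            rw [← hc, Finset.sum_apply]
            exact Finset.sum_congr rfl fun π _ => rfl
          rw [hvj, Finset.mul_sum]
      _ = ∑ π, (∑ j, (starRingEnd ℂ) (ξ σ j) * ξ π j) * c π := by
          rw [Finset.sum_comm]
          refine Finset.sum_congr rfl fun π _ => ?_
          rw [Finset.sum_mul]
          exact Finset.sum_congr rfl fun j _ => by ring
      _ = ∑ π, Gm σ π * c π := by
          refine Finset.sum_congr rfl fun π _ => ?_
          rw [hGm σ π]
  -- the Gram matrix is invertible
  have hGmunit : IsUnit Gm.det := gram_det_isUnit ξ hind Gm hGm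
  have hGminvmul : Gm⁻¹ * Gm = 1 := Matrix.nonsing_inv_mul Gm hGmunit
  have hcinv : ∀ π, c π = ∑ σ, Gm⁻¹ π σ * K σ := by
    have hKvec : Gm *ᵥ c = K := by
      funext σ
      rw [show (Gm *ᵥ c) σ = ∑ π, Gm σ π * c π from rfl, ← hGmc σ]
    have hcc : Gm⁻¹ *ᵥ (Gm *ᵥ c) = c := by
      rw [Matrix.mulVec_mulVec, hGminvmul, Matrix.one_mulVec]
    intro π
    rw [← hKvec]
    conv_lhs => rw [← hcc]
    rfl
  -- conclude
  have hL : (∫ g : G, ∏ a, dec (e a) ((M g *ᵥ xiI N I) (i a)) ∂μ) = v i :=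
    integral_congr_ae (ae_of_all μ fun g => hpt g)
  rw [hL]
  calc v i = ∑ π, c π * ξ π i := by
        rw [← hc, Finset.sum_apply]
        exact Finset.sum_congr rfl fun π _ => rfl
    _ = ∑ π, (∑ σ, Gm⁻¹ π σ * K σ) * ξ π i :=
        Finset.sum_congr rfl fun π _ => by rw [hcinv π]
    _ = ∑ π, ∑ σ, ξ π i * K σ * Gm⁻¹ π σ := by
        refine Finset.sum_congr rfl fun π _ => ?_
        rw [Finset.sum_mul]
        exact Finset.sum_congr rfl fun σ _ => by ring
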